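/- The base observer O_Base supports elision condition (i): for all histories h1, h2 and addresses a, b, c with a ≠ c ≠ b and h2 = h1[a/b], the allowed behavior on c coincides: F_{h1}(c) = F_{h2}(c). -/

import Mathlib

/-- Events relevant for the base observer: retires, frees, and other events. -/
inductive Ev (Thread Adr : Type*) where
  | retire (t : Thread) (a : Adr)
  | free (a : Adr)
  | other

variable {Thread Adr : Type*}

/-- The locations of the base observer `O_Base`. -/
inductive BaseLoc where
  | init | retired | final
deriving DecidableEq

/-- The (deterministic, with implicit self-loops) transition function of
`O_Base`, parameterized by the observed address `v`:
from `init`, `retire(_, v)` goes to `retired` and `free(v)` goes to the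
accepting location `final`; from `retired`, `free(v)` goes back to `init`;
`final` is trapping; all other events are self-loops. -/
def baseStep [DecidableEq Adr] (v : Adr) : BaseLoc → Ev Thread Adr → BaseLoc
  | .init, .retire _ a => if a = v then .retired else .init
  | .init, .free a => if a = v then .final else .init
  | .retired, .free a => if a = v then .init else .retired
  | .final, _ => .final
  | l, _ => l

/-- The specification of `O_Base`: histories accepted by no instantiation of
the observed address `v`, i.e., no run from the initial location reaches the
accepting location. -/
def specBase [DecidableEq Adr] (h : List (Ev Thread Adr)) : Prop :=
  ∀ v : Adr, h.foldl (baseStep v) BaseLoc.init ≠ BaseLoc.final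


/-- Every free-event of `h` targets only address `c`. -/
def FreesOnly (c : Adr) (h : List (Ev Thread Adr)) : Prop :=
  ∀ e ∈ h, ∀ b, e = Ev.free b → b = c

/-- The behavior allowed by `O_Base` on address `c` after history `h`:
`F_h(c) := { h' | h.h' ∈ spec(O_Base) ∧ all free-events of h' target c }`. -/
def BehavBase [DecidableEq Adr] (h : List (Ev Thread Adr)) (c : Adr) :
    Set (List (Ev Thread Adr)) :=
  { h' | specBase (h ++ h') ∧ FreesOnly c h' }

/-- Swap addresses `a` and `b`. -/
def swapAdr [DecidableEq Adr] (a b x : Adr) : Adr :=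
  if x = a then b else if x = b then a else x

/-- Replacement in an event: swap every occurrence of `a` with `b`. -/
def Ev.repl [DecidableEq Adr] (a b : Adr) : Ev Thread Adr → Ev Thread Adr
  | .retire t c => .retire t (swapAdr a b c)
  | .free c => .free (swapAdr a b c)
  | .other => .other

/-- Replacement `h[a/b]` in a history. -/
def replHist [DecidableEq Adr] (a b : Adr) (h : List (Ev Thread Adr)) :
    List (Ev Thread Adr) :=
  h.map (Ev.repl a b)

lemma swapAdr_swapAdr [DecidableEq Adr] (a b x : Adr) :
    swapAdr a b (swapAdr a b x) = x := by
  unfold swapAdr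
  by_cases hxa : x = a <;> by_cases hxb : x = b <;> simp_all <;> split <;> simp_all

lemma repl_repl [DecidableEq Adr] (a b : Adr) (e : Ev Thread Adr) :
    Ev.repl a b (Ev.repl a b e) = e := by
  cases e <;> simp [Ev.repl, swapAdr_swapAdr]

lemma replHist_replHist [DecidableEq Adr] (a b : Adr) (h : List (Ev Thread Adr)) :
    replHist a b (replHist a b h) = h := by
  simp [replHist, List.map_map, Function.comp_def, repl_repl]

lemma baseStep_repl [DecidableEq Adr] (a b v : Adr) (l : BaseLoc) (e : Ev Thread Adr) :
    baseStep v l (Ev.repl a b e) = baseStep (swapAdr a b v) l e := by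
  have key : ∀ x : Adr, (swapAdr a b x = v) = (x = swapAdr a b v) := by
    intro x
    simp only [eq_iff_iff]
    constructor <;> intro h
    · rw [← h, swapAdr_swapAdr]
    · rw [h, swapAdr_swapAdr]
  cases e <;> cases l <;> simp [Ev.repl, baseStep, key]

lemma foldl_repl [DecidableEq Adr] (a b v : Adr) (h : List (Ev Thread Adr))
    (s : BaseLoc) :
    h.foldl (baseStep v) s = (replHist a b h).foldl (baseStep (swapAdr a b v)) s := by
  induction h generalizing s with
  | nil => rfl
  | cons e t ih =>
    simp only [replHist, List.map_cons, List.foldl_cons]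
    rw [baseStep_repl, swapAdr_swapAdr, ih]
    rfl

lemma foldl_final [DecidableEq Adr] (v : Adr) (h : List (Ev Thread Adr)) :
    h.foldl (baseStep v) BaseLoc.final = BaseLoc.final := by
  induction h with
  | nil => rfl
  | cons e t ih => simpa [baseStep] using ih

lemma foldl_ne_final [DecidableEq Adr] {v c : Adr} (hvc : v ≠ c)
    {h : List (Ev Thread Adr)} (hf : FreesOnly c h) {s : BaseLoc}
    (hs : s ≠ BaseLoc.final) :
    h.foldl (baseStep v) s ≠ BaseLoc.final := by
  induction h generalizing s with
  | nil => simpa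
  | cons e t ih =>
    have hf' : FreesOnly c t := fun e' he' => hf e' (List.mem_cons_of_mem _ he')
    refine ih hf' ?_
    cases e with
    | retire th d => cases s <;> simp_all [baseStep] <;> split <;> simp
    | free d =>
      have hdc : d = c := hf _ List.mem_cons_self d rfl
      subst hdc
      have hcv : d ≠ v := fun h => hvc h.symm
      cases s with
      | init => simp [baseStep, hcv]
      | retired => simp only [baseStep]; split <;> simp
      | final => exact absurd rfl hs
    | other => cases s <;> simp_all [baseStep]

lemma spec_mono [DecidableEq Adr] {h1 : List (Ev Thread Adr)} (a b c : Adr)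
    (hca : c ≠ a) (hcb : c ≠ b) {h' : List (Ev Thread Adr)}
    (hspec : specBase (h1 ++ h')) (hf : FreesOnly c h') :
    specBase (replHist a b h1 ++ h') := by
  intro v
  rw [List.foldl_append]
  have hswap : (replHist a b h1).foldl (baseStep v) BaseLoc.init
      = h1.foldl (baseStep (swapAdr a b v)) BaseLoc.init := by
    rw [foldl_repl a b (swapAdr a b v) h1, swapAdr_swapAdr]
  rw [hswap]
  have hspecw := hspec (swapAdr a b v)
  rw [List.foldl_append] at hspecw
  by_cases hvc : v = c
  · have hwv : swapAdr a b v = v := by simp [hvc, swapAdr, hca, hcb]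
    rw [hwv] at hspecw ⊢
    exact hspecw
  · refine foldl_ne_final hvc hf ?_
    intro h
    rw [h, foldl_final] at hspecw
    exact hspecw rfl

/-- `O_Base` supports elision condition (i): for all histories `h1`, `h2` and
addresses `a`, `b`, `c` with `a ≠ c ≠ b` and `h2 = h1[a/b]`, the behavior
allowed on `c` coincides: `F_{h1}(c) = F_{h2}(c)`. -/
theorem specBase_elision_replace [DecidableEq Adr]
    (h1 h2 : List (Ev Thread Adr)) (a b c : Adr)
    (hac : a ≠ c) (hcb : c ≠ b) (hrepl : h2 = replHist a b h1) :
    BehavBase h1 c = BehavBase h2 c := by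
  subst hrepl
  ext h'
  constructor
  · rintro ⟨hs, hf⟩
    exact ⟨spec_mono a b c hac.symm hcb hs hf, hf⟩
  · rintro ⟨hs, hf⟩
    have := spec_mono a b c hac.symm hcb hs hf
    rw [replHist_replHist] at this
    exact ⟨this, hf⟩
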